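/- Let w be a word over locations and let ℓ₁, ℓ₂ be fixed locations and K a set of locations. If there exist positions i < j of w with w_i = ℓ₁, w_j = ℓ₂, btw(i,j) ∩ K = ∅ and i and j incomparable or i ⊑ j in the trace order (i.e., not j ⊑ i), then there exists a word v Mazurkiewicz-equivalent to w that contains an occurrence of ℓ₁ followed, with no intervening K-location, by an occurrence of ℓ₂ (i.e., v ∈ L*·ℓ₁·(complement of K)*·ℓ₂·L*). -/

import Mathlib

section
variable {P N R : Type*}

/-- Independence of letters (locations): disjoint domains of their nodes. -/
def IndepW (dom : N → Set P) (l1 l2 : N × R) : Prop :=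
  Disjoint (dom l1.1) (dom l2.1)

def SwapW (dom : N → Set P) (w1 w2 : List (N × R)) : Prop :=
  ∃ u v l1 l2, IndepW dom l1 l2 ∧ w1 = u ++ l1 :: l2 :: v ∧ w2 = u ++ l2 :: l1 :: v

/-- Mazurkiewicz equivalence of words. -/
def MazEquivW (dom : N → Set P) : List (N × R) → List (N × R) → Prop :=
  Relation.ReflTransGen (SwapW dom)

/-- The one-step trace order `⊑'` on positions of `w`. -/
def ordStep (dom : N → Set P) (w : List (N × R)) (i j : Fin w.length) : Prop :=
  (i : ℕ) ≤ (j : ℕ) ∧ ¬ IndepW dom (w.get i) (w.get j)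

/-- The trace order `⊑`: transitive closure of `⊑'`. -/
def ord (dom : N → Set P) (w : List (N × R)) : Fin w.length → Fin w.length → Prop :=
  Relation.TransGen (ordStep dom w)

/- ## Auxiliary machinery -/

open Classical in
/-- Split a list `t` into (elements independent of the growing `cone`,
elements attached to the cone). -/
noncomputable def splt {α : Type*} (Rr : α → α → Prop) : List α → List α → List α × List α
  | _, [] => ([], [])
  | cone, x :: t =>
    if ∃ c ∈ cone, Rr c x then
      let r := splt Rr (cone ++ [x]) t
      (r.1, x :: r.2)
    else
      let r := splt Rr cone t
      (x :: r.1, r.2)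

lemma splt_sublist2 {α : Type*} (Rr : α → α → Prop) :
    ∀ (t cone : List α), (splt Rr cone t).2.Sublist t := by
  intro t
  induction t with
  | nil => intro cone; simp [splt]
  | cons x t ih =>
    intro cone
    rw [splt]
    split_ifs with h
    · simpa using (ih (cone ++ [x])).cons_cons x
    · simpa using (ih cone).cons x

lemma splt_mem2 {α : Type*} (Rr : α → α → Prop) :
    ∀ (t cone : List α) (x : α), x ∈ (splt Rr cone t).2 →
      ∃ c ∈ cone, Relation.ReflTransGen Rr c x := by
  intro t
  induction t with
  | nil => intro cone x hx; simp [splt] at hx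
  | cons a t ih =>
    intro cone x hx
    rw [splt] at hx
    split_ifs at hx with h
    · simp only [List.mem_cons] at hx
      obtain ⟨c, hc, hRc⟩ := h
      rcases hx with rfl | hx
      · exact ⟨c, hc, Relation.ReflTransGen.single hRc⟩
      · obtain ⟨c', hc', hchain⟩ := ih (cone ++ [a]) x hx
        rcases List.mem_append.1 hc' with hc' | hc'
        · exact ⟨c', hc', hchain⟩
        · simp only [List.mem_singleton] at hc'
          subst hc'
          exact ⟨c, hc, (Relation.ReflTransGen.single hRc).trans hchain⟩
    · exact ih cone x hx

lemma maz_refl {dom : N → Set P} (u : List (N × R)) : MazEquivW dom u u :=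
  Relation.ReflTransGen.refl

lemma maz_append_left {dom : N → Set P} {x y : List (N × R)} (c : List (N × R))
    (h : MazEquivW dom x y) : MazEquivW dom (c ++ x) (c ++ y) := by
  refine Relation.ReflTransGen.lift (fun z => c ++ z) ?_ _ _ h
  rintro a b ⟨u, v, l1, l2, hind, rfl, rfl⟩
  exact ⟨c ++ u, v, l1, l2, hind, by simp, by simp⟩

lemma maz_append_right {dom : N → Set P} {x y : List (N × R)} (c : List (N × R))
    (h : MazEquivW dom x y) : MazEquivW dom (x ++ c) (y ++ c) := by
  refine Relation.ReflTransGen.lift (fun z => z ++ c) ?_ _ _ h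
  rintro a b ⟨u, v, l1, l2, hind, rfl, rfl⟩
  exact ⟨u, v ++ c, l1, l2, hind, by simp, by simp⟩

lemma maz_cons {dom : N → Set P} {x y : List (N × R)} (a : N × R)
    (h : MazEquivW dom x y) : MazEquivW dom (a :: x) (a :: y) := by
  simpa using maz_append_left [a] h

lemma indep_symm {dom : N → Set P} {a b : N × R} (h : IndepW dom a b) : IndepW dom b a :=
  Disjoint.symm h

lemma maz_reverse {dom : N → Set P} {x y : List (N × R)}
    (h : MazEquivW dom x y) : MazEquivW dom x.reverse y.reverse := by
  refine Relation.ReflTransGen.lift List.reverse ?_ _ _ h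
  rintro a b ⟨u, v, l1, l2, hind, rfl, rfl⟩
  exact ⟨v.reverse, u.reverse, l2, l1, indep_symm hind, by simp, by simp⟩

lemma maz_move_front {dom : N → Set P} (a : N × R) :
    ∀ (u s : List (N × R)), (∀ y ∈ u, IndepW dom y a) →
      MazEquivW dom (u ++ a :: s) (a :: (u ++ s)) := by
  intro u
  induction u with
  | nil => intro s _; exact maz_refl _
  | cons b u ih =>
    intro s hind
    have h1 : MazEquivW dom (b :: (u ++ a :: s)) (b :: (a :: (u ++ s))) :=
      maz_cons b (ih s (fun y hy => hind y (List.mem_cons_of_mem _ hy)))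
    have h2 : MazEquivW dom (b :: a :: (u ++ s)) (a :: b :: (u ++ s)) :=
      Relation.ReflTransGen.single
        ⟨[], u ++ s, b, a, hind b List.mem_cons_self, rfl, rfl⟩
    simpa [MazEquivW] using h1.trans h2

lemma splt_equiv {α : Type*} (dom : N → Set P) (g : α → N × R) (Rr : α → α → Prop) :
    ∀ (t cone : List α),
      List.Pairwise (fun a b => ¬ Rr a b → IndepW dom (g a) (g b)) (cone ++ t) →
      MazEquivW dom (cone.map g ++ t.map g)
        ((splt Rr cone t).1.map g ++ (cone.map g ++ (splt Rr cone t).2.map g)) := by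
  intro t
  induction t with
  | nil => intro cone _; simp [splt]; exact maz_refl _
  | cons x t ih =>
    intro cone hpw
    rw [splt]
    split_ifs with h
    · have hpw' : List.Pairwise (fun a b => ¬ Rr a b → IndepW dom (g a) (g b))
          ((cone ++ [x]) ++ t) := by simpa using hpw
      have := ih (cone ++ [x]) hpw'
      simp only [List.map_append, List.map_cons, List.map_nil, List.append_assoc,
        List.singleton_append, List.nil_append] at this ⊢
      exact this
    · push_neg at h
      have hindep : ∀ y ∈ cone.map g, IndepW dom y (g x) := by
        intro y hy
        obtain ⟨c, hc, rfl⟩ := List.mem_map.1 hy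
        have : ¬ Rr c x → IndepW dom (g c) (g x) := by
          have := List.pairwise_append.1 hpw
          exact this.2.2 c hc x List.mem_cons_self
        exact this (h c hc)
      have h1 : MazEquivW dom (cone.map g ++ (x :: t).map g)
          (g x :: (cone.map g ++ t.map g)) := by
        simpa using maz_move_front (g x) (cone.map g) (t.map g) hindep
      have hpw2 : List.Pairwise (fun a b => ¬ Rr a b → IndepW dom (g a) (g b))
          (cone ++ t) := hpw.sublist (List.Sublist.append_left (List.sublist_cons_self x t) cone)
      have h2 := maz_cons (g x) (ih cone hpw2)
      have := h1.trans h2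
      simp only [List.map_cons, List.append_assoc, List.cons_append] at this ⊢
      exact this

/-- if `w` has positions `i < j` carrying `ℓ₁` and `ℓ₂`, with
`btw(i,j) ∩ K = ∅` and not `j ⊑ i`, then some word Mazurkiewicz-equivalent to
`w` is in `L*·ℓ₁·(K̄)*·ℓ₂·L*`. -/
theorem trace_reordering (dom : N → Set P) (K : Set (N × R)) (l1 l2 : N × R)
    (w : List (N × R)) (i j : Fin w.length) (hij : (i : ℕ) < (j : ℕ))
    (hi : w.get i = l1) (hj : w.get j = l2)
    (hbtw : ∀ k, ord dom w i k → ord dom w k j → w.get k ∉ K)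
    (hnot : ¬ ord dom w j i) :
    ∃ v1 v2 v3, MazEquivW dom w (v1 ++ l1 :: v2 ++ l2 :: v3) ∧
      ∀ l ∈ v2, l ∉ K := by
  classical
  set g : Fin w.length → N × R := w.get with hg
  -- the list of positions strictly between i and j
  have hrange : ∀ k ∈ List.range' (↑i+1) (↑j-(↑i+1)), k < w.length := by
    intro k hk
    have := List.mem_range'_1.1 hk
    have hjl := j.isLt
    omega
  set M : List (Fin w.length) :=
    (List.range' (↑i+1) (↑j-(↑i+1))).pmap (fun k hk => (⟨k, hk⟩ : Fin w.length)) hrange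
    with hM
  have hMmem : ∀ x ∈ M, (↑i : ℕ) < ↑x ∧ (↑x : ℕ) < ↑j := by
    intro x hx
    rw [hM] at hx
    obtain ⟨k, hk, rfl⟩ := List.mem_pmap.1 hx
    have := List.mem_range'_1.1 hk
    simp only []
    omega
  have hMpw : List.Pairwise (fun a b : Fin w.length => (↑a : ℕ) < ↑b) M := by
    rw [hM, List.pairwise_pmap]
    exact (List.pairwise_lt_range').imp (by intro a b h h1 h2; simpa using h)
  have hMlen : M.length = ↑j - (↑i + 1) := by
    rw [hM]; simp [List.length_pmap]
  -- middle letters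
  have hMap : M.map g = (w.drop (↑i+1)).take (↑j-(↑i+1)) := by
    apply List.ext_get
    · simp [hMlen, List.length_take, List.length_drop]
    · intro n h1 h2
      have hn : n < (↑j : ℕ) - (↑i + 1) := by
        simpa [hMlen] using h1
      simp only [List.get_eq_getElem, List.getElem_map, hM, List.getElem_pmap,
        List.getElem_range', List.getElem_take, List.getElem_drop, hg, one_mul, mul_one]
  -- decomposition of w
  have hdecomp : w = w.take ↑i ++ g i :: (M.map g ++ g j :: w.drop (↑j+1)) := by
    conv_lhs => rw [← List.take_append_drop ↑i w]
    congr 1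
    rw [List.drop_eq_getElem_cons i.isLt]
    congr 1
    conv_lhs => rw [← List.take_append_drop ((↑j:ℕ)-(↑i+1)) (w.drop ((↑i:ℕ)+1))]
    rw [hMap]
    congr 1
    rw [List.drop_drop]
    have heq : (↑i:ℕ) + 1 + ((↑j:ℕ) - (↑i+1)) = (↑j:ℕ) := by omega
    rw [heq, List.drop_eq_getElem_cons j.isLt]; rfl
  -- Phase L : pull positions not above i to the left of i
  set RL : Fin w.length → Fin w.length → Prop := ordStep dom w with hRL
  set oL : List (Fin w.length) := (splt RL [i] M).1 with hoL
  set iL : List (Fin w.length) := (splt RL [i] M).2 with hiL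
  have hGoodL : List.Pairwise (fun a b => ¬ RL a b → IndepW dom (g a) (g b)) ([i] ++ M) := by
    have hpw : List.Pairwise (fun a b : Fin w.length => (↑a : ℕ) < ↑b) ([i] ++ M) := by
      rw [List.singleton_append, List.pairwise_cons]
      exact ⟨fun b hb => (hMmem b hb).1, hMpw⟩
    refine hpw.imp ?_
    intro a b hab hR
    have hR' : ¬ ((↑a:ℕ) ≤ ↑b ∧ ¬ IndepW dom (w.get a) (w.get b)) := hR
    push_neg at hR'
    exact hR' (le_of_lt hab)
  have equivL := splt_equiv dom g RL M [i] hGoodL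
  have hiLsub : iL.Sublist M := splt_sublist2 _ _ _
  have hiLmem : ∀ x ∈ iL, ord dom w i x := by
    intro x hx
    obtain ⟨c, hc, hchain⟩ := splt_mem2 RL M [i] x hx
    simp only [List.mem_singleton] at hc
    rw [hc] at hchain
    rcases (Relation.reflTransGen_iff_eq_or_transGen).1 hchain with h | h
    · exfalso
      have h1 := (hMmem x (hiLsub.mem hx)).1
      have h2 : (↑x:ℕ) = ↑i := by rw [h]
      omega
    · exact h
  -- Phase R : push positions not below j to the right of j
  set RR : Fin w.length → Fin w.length → Prop := fun a b => ordStep dom w b a with hRR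
  set oR : List (Fin w.length) := (splt RR [j] iL.reverse).1 with hoR
  set iR : List (Fin w.length) := (splt RR [j] iL.reverse).2 with hiR
  have hGoodR : List.Pairwise (fun a b => ¬ RR a b → IndepW dom (g a) (g b))
      ([j] ++ iL.reverse) := by
    have hpw : List.Pairwise (fun a b : Fin w.length => (↑b : ℕ) < ↑a) ([j] ++ iL.reverse) := by
      rw [List.singleton_append, List.pairwise_cons]
      constructor
      · intro b hb
        exact (hMmem b (hiLsub.mem (List.mem_reverse.1 hb))).2
      · rw [List.pairwise_reverse]
        exact hMpw.sublist hiLsub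
    refine hpw.imp ?_
    intro a b hab hR
    have hR' : ¬ ((↑b:ℕ) ≤ ↑a ∧ ¬ IndepW dom (w.get b) (w.get a)) := hR
    push_neg at hR'
    exact indep_symm (hR' (le_of_lt hab))
  have equivR' := splt_equiv dom g RR iL.reverse [j] hGoodR
  have hiRmem : ∀ x ∈ iR, ord dom w x j := by
    intro x hx
    obtain ⟨c, hc, hchain⟩ := splt_mem2 RR iL.reverse [j] x hx
    simp only [List.mem_singleton] at hc
    rw [hc] at hchain
    have hxM : x ∈ M := hiLsub.mem (List.mem_reverse.1 ((splt_sublist2 RR iL.reverse [j]).mem hx))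
    rcases (Relation.reflTransGen_iff_eq_or_transGen).1 hchain with h | h
    · exfalso
      have h1 := (hMmem x hxM).2
      have h2 : (↑x:ℕ) = ↑j := by rw [h]
      omega
    · have h' : Relation.TransGen (Function.swap (ordStep dom w)) j x := h
      exact (Relation.transGen_swap).1 h'
  have hiRiL : ∀ x ∈ iR, x ∈ iL := by
    intro x hx
    exact List.mem_reverse.1 ((splt_sublist2 RR iL.reverse [j]).mem hx)
  -- assembling everything
  have equivR : MazEquivW dom (iL.map g ++ [g j])
      ((iR.map g).reverse ++ ([g j] ++ (oR.map g).reverse)) := by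
    have := maz_reverse equivR'
    rw [← hoR, ← hiR] at this
    simpa [List.reverse_append, List.map_reverse, List.append_assoc] using this
  refine ⟨w.take ↑i ++ oL.map g, (iR.map g).reverse, (oR.map g).reverse ++ w.drop (↑j+1),
    ?_, ?_⟩
  · have e1 : MazEquivW dom w
        (w.take ↑i ++ ((oL.map g ++ ([g i] ++ iL.map g)) ++ (g j :: w.drop (↑j+1)))) := by
      conv_lhs => rw [hdecomp]
      apply maz_append_left
      have := maz_append_right (g j :: w.drop (↑j+1)) equivL
      rw [← hoL, ← hiL] at this
      simpa [List.append_assoc] using this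
    have e2 : MazEquivW dom
        (w.take ↑i ++ ((oL.map g ++ ([g i] ++ iL.map g)) ++ (g j :: w.drop (↑j+1))))
        ((w.take ↑i ++ oL.map g) ++ l1 :: ((iR.map g).reverse ++
          l2 :: ((oR.map g).reverse ++ w.drop (↑j+1)))) := by
      have e3 := maz_append_right (w.drop (↑j+1)) equivR
      have e4 := maz_append_left (w.take ↑i ++ (oL.map g ++ [g i])) e3
      rw [hi, hj] at e4
      have hgi : g i = l1 := hi
      have hgj : g j = l2 := hj
      simpa [List.append_assoc, hgi, hgj] using e4
    simpa [MazEquivW, List.append_assoc] using e1.trans e2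
  · intro l hl
    rw [List.mem_reverse, List.mem_map] at hl
    obtain ⟨x, hx, rfl⟩ := hl
    exact hbtw x (hiLmem x (hiRiL x hx)) (hiRmem x hx)

end
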